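/- arXiv:math/0611447 — 3 statements merged into one kernel-verified Lean document; each statement's English description precedes it below -/
import Mathlib

section
/- For every complex number w with positive real part, ∑_{k=0}^∞ (-1)^k/(k² + w²) = 1/(2w²) + π/(2w·sinh(πw)). -/
open Real Complex

private lemma sq_ne (w : ℂ) (hw : 0 < w.re) (n : ℤ) : (n:ℂ)^2 + w^2 ≠ 0 := by
  have hc1 : w - I * n ≠ 0 := by
    intro h
    have := congrArg Complex.re h
    simp [Complex.sub_re, Complex.mul_re] at this
    exact hw.ne' this
  have hc2 : -w - I * n ≠ 0 := by
    intro h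
    have := congrArg Complex.re h
    simp [Complex.sub_re, Complex.mul_re] at this
    exact hw.ne' (by linarith)
  intro h
  have hq : (n:ℂ)^2 + w^2 = -((w - I * n) * (-w - I * n)) := by
    linear_combination (n:ℂ)^2 * Complex.I_sq
  rw [hq, neg_eq_zero, mul_eq_zero] at h
  tauto

private lemma sinh_ne (w : ℂ) (hw : 0 < w.re) : Complex.sinh ((π:ℂ) * w) ≠ 0 := by
  intro h
  have h2 : Complex.sin ((π:ℂ) * w * I) = 0 := by
    rw [Complex.sin_mul_I, h, zero_mul]
  obtain ⟨k, hk⟩ := Complex.sin_eq_zero_iff.1 h2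
  have hπ : (π:ℂ) ≠ 0 := by exact_mod_cast Real.pi_ne_zero
  have hwI : w * I = (k:ℂ) :=
    mul_right_cancel₀ hπ (by linear_combination hk : w * I * π = (k:ℂ) * π)
  have him : (w * I).im = ((k:ℂ)).im := by rw [hwI]
  simp [Complex.mul_I_im] at him
  exact hw.ne' him

private instance fact2pi : Fact (0 < 2 * π) := ⟨by positivity⟩

private noncomputable def myF (w : ℂ) : C(AddCircle (2 * π), ℂ) :=
  ⟨AddCircle.liftIco (2 * π) (-π) (fun x => Complex.cosh (w * x)), by
    apply AddCircle.liftIco_continuous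
    · have h1 : ((-π + 2 * π : ℝ) : ℂ) = (π : ℂ) := by push_cast; ring
      have h2 : ((-π : ℝ) : ℂ) = -(π : ℂ) := by push_cast; ring
      simp only [h1, h2, mul_neg, Complex.cosh_neg]
    · exact (Complex.continuous_cosh.comp
        (continuous_const.mul Complex.continuous_ofReal)).continuousOn⟩

private lemma myF_coeff (w : ℂ) (hw : 0 < w.re) (n : ℤ) :
    fourierCoeff (⇑(myF w)) n =
      (-1) ^ n * w * Complex.sinh ((π : ℂ) * w) / (π * ((n : ℂ) ^ 2 + w ^ 2)) := by
  have hc1 : w - I * n ≠ 0 := by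
    intro h
    have := congrArg Complex.re h
    simp [Complex.sub_re, Complex.mul_re] at this
    exact hw.ne' this
  have hc2 : -w - I * n ≠ 0 := by
    intro h
    have := congrArg Complex.re h
    simp [Complex.sub_re, Complex.mul_re] at this
    exact hw.ne' (by linarith)
  have hn2 := sq_ne w hw n
  have myInt :
      ∫ x in (-π:ℝ)..π, Complex.exp (-(I * n * x)) * Complex.cosh (w * x)
        = (-1) ^ n * 2 * w * Complex.sinh ((π:ℂ) * w) / ((n:ℂ) ^ 2 + w ^ 2) := by
    have hint : ∀ x : ℝ, Complex.exp (-(I * n * x)) * Complex.cosh (w * x)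
        = (Complex.exp ((w - I * n) * x) + Complex.exp ((-w - I * n) * x)) / 2 := by
      intro x
      rw [Complex.cosh, mul_div_assoc', mul_add, ← Complex.exp_add, ← Complex.exp_add]
      ring_nf
    rw [intervalIntegral.integral_congr (fun x _ => hint x)]
    have key : ∀ c : ℂ, c ≠ 0 → (∫ x in (-π:ℝ)..π, Complex.exp (c * x) / 2)
        = (Complex.exp (c * π) - Complex.exp (-(c * π))) / (2 * c) := by
      intro c hc
      rw [intervalIntegral.integral_div, integral_exp_mul_complex hc]
      push_cast
      rw [mul_neg]
      ring
    have split : (∫ x in (-π:ℝ)..π,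
          (Complex.exp ((w - I * n) * x) + Complex.exp ((-w - I * n) * x)) / 2)
        = (∫ x in (-π:ℝ)..π, Complex.exp ((w - I * n) * x) / 2)
          + ∫ x in (-π:ℝ)..π, Complex.exp ((-w - I * n) * x) / 2 := by
      rw [← intervalIntegral.integral_add]
      · congr 1; ext x; ring
      · exact ((Complex.continuous_exp.comp
          (continuous_const.mul Complex.continuous_ofReal)).intervalIntegrable _ _).div_const 2
      · exact ((Complex.continuous_exp.comp
          (continuous_const.mul Complex.continuous_ofReal)).intervalIntegrable _ _).div_const 2
    rw [split, key _ hc1, key _ hc2]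
    have hepi : Complex.exp (I * n * π) = (-1) ^ n := by
      rw [show I * (n:ℂ) * π = (n:ℂ) * (π * I) by ring, Complex.exp_int_mul,
        Complex.exp_pi_mul_I]
    have hepi' : Complex.exp (-(I * n * π)) = (-1) ^ n := by
      rw [show -(I * (n:ℂ) * π) = (-n:ℤ) * (π * I) by push_cast; ring, Complex.exp_int_mul,
        Complex.exp_pi_mul_I, zpow_neg, ← inv_zpow, inv_neg, inv_one]
    have e1 : Complex.exp ((w - I * n) * π) = Complex.exp (w * π) * (-1) ^ n := by
      rw [show (w - I * n) * π = w * π + -(I * n * π) by ring, Complex.exp_add, hepi']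
    have e2 : Complex.exp (-((w - I * n) * π)) = Complex.exp (-(w * π)) * (-1) ^ n := by
      rw [show -((w - I * n) * π) = -(w * π) + I * n * π by ring, Complex.exp_add, hepi]
    have e3 : Complex.exp ((-w - I * n) * π) = Complex.exp (-(w * π)) * (-1) ^ n := by
      rw [show (-w - I * n) * π = -(w * π) + -(I * n * π) by ring, Complex.exp_add, hepi']
    have e4 : Complex.exp (-((-w - I * n) * π)) = Complex.exp (w * π) * (-1) ^ n := by
      rw [show -((-w - I * n) * π) = w * π + I * n * π by ring, Complex.exp_add, hepi]
    rw [e1, e2, e3, e4, Complex.sinh]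
    rw [show ((π:ℂ) * w) = w * π by ring]
    rw [div_add_div _ _ (mul_ne_zero two_ne_zero hc1) (mul_ne_zero two_ne_zero hc2),
      div_eq_div_iff (mul_ne_zero (mul_ne_zero two_ne_zero hc1)
        (mul_ne_zero two_ne_zero hc2)) hn2]
    linear_combination (-4*((-1:ℂ)^n)*w*(Complex.exp (w*(π:ℂ)) -
      Complex.exp (-(w*(π:ℂ))))*(n:ℂ)^2) * Complex.I_sq
  have h0 : ⇑(myF w) = AddCircle.liftIco (2*π) (-π) (fun x => Complex.cosh (w * x)) := rfl
  rw [h0, fourierCoeff_liftIco_eq, fourierCoeffOn_eq_integral]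
  rw [show (-π + 2 * π - -π : ℝ) = 2*π from by ring, show (-π + 2 * π : ℝ) = π from by ring]
  have hcong : ∀ x ∈ Set.uIcc (-π) π,
      (fourier (-n) (x : AddCircle (2*π))) • Complex.cosh (w * x)
        = Complex.exp (-(I * n * x)) * Complex.cosh (w * x) := by
    intro x _
    rw [smul_eq_mul, fourier_coe_apply]
    have hπ : (π:ℂ) ≠ 0 := by exact_mod_cast Real.pi_ne_zero
    have harg : 2 * (π:ℂ) * I * ((-n : ℤ):ℂ) * (x:ℝ) / ((2 * π : ℝ):ℂ) = -(I * n * x) := by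
      push_cast
      field_simp
    rw [harg]
  rw [intervalIntegral.integral_congr hcong, myInt]
  have hπ : (π:ℂ) ≠ 0 := by exact_mod_cast Real.pi_ne_zero
  rw [Complex.real_smul]
  push_cast
  field_simp

private lemma summable_inv_sq (w : ℂ) (hw : 0 < w.re) :
    Summable (fun n : ℤ => ‖(((n:ℂ)^2 + w^2))⁻¹‖) := by
  have hNat : Summable (fun m : ℕ => ‖(((m:ℂ)^2 + w^2))⁻¹‖) := by
    have hg : Summable (fun m : ℕ => 2 * ((m:ℝ)^2)⁻¹) := by
      have := (Real.summable_one_div_nat_pow (p := 2)).mpr (by norm_num)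
      simpa [one_div] using this.mul_left 2
    apply Summable.of_norm_bounded_eventually_nat hg
    filter_upwards [Filter.eventually_ge_atTop (⌈2*‖w^2‖⌉₊ + 1)] with m hm
    have h1 : (1:ℝ) ≤ (m:ℝ) := by exact_mod_cast Nat.one_le_iff_ne_zero.2 (by omega)
    have h2 : 2*‖w^2‖ ≤ (m:ℝ) := by
      calc 2*‖w^2‖ ≤ (⌈2*‖w^2‖⌉₊ : ℝ) := Nat.le_ceil _
        _ ≤ (m:ℝ) := by exact_mod_cast Nat.le_of_succ_le hm
    have h3 : 2*‖w^2‖ ≤ (m:ℝ)^2 := le_trans h2 (by nlinarith)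
    have hpos : (0:ℝ) < (m:ℝ)^2 := by nlinarith
    have hlow : (m:ℝ)^2/2 ≤ ‖(m:ℂ)^2 + w^2‖ := by
      have key : ‖(m:ℂ)^2‖ ≤ ‖(m:ℂ)^2 + w^2‖ + ‖w^2‖ := by
        have := norm_add_le ((m:ℂ)^2 + w^2) (-(w^2))
        rwa [add_neg_cancel_right, norm_neg] at this
      have hm2 : ‖(m:ℂ)^2‖ = (m:ℝ)^2 := by
        rw [norm_pow]
        simp
      nlinarith
    have hlowpos : (0:ℝ) < ‖(m:ℂ)^2 + w^2‖ := lt_of_lt_of_le (by nlinarith) hlow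
    rw [norm_norm, norm_inv]
    rw [inv_le_comm₀ hlowpos (by positivity)]
    calc (2 * ((m:ℝ)^2)⁻¹)⁻¹ = (m:ℝ)^2/2 := by field_simp
      _ ≤ ‖(m:ℂ)^2 + w^2‖ := hlow
  apply Summable.of_nat_of_neg_add_one
  · simpa using hNat
  · have : Summable (fun m : ℕ => ‖((((m+1:ℕ):ℂ))^2 + w^2)⁻¹‖) :=
      (summable_nat_add_iff 1).2 hNat
    apply this.congr
    intro m
    congr 2
    push_cast
    ring

/-- For every complex `w` with positive real part,
`∑_{k=0}^∞ (-1)^k/(k² + w²) = 1/(2w²) + π/(2 w sinh(π w))`. -/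
theorem stmt1 (w : ℂ) (hw : 0 < w.re) :
    HasSum (fun k : ℕ => (-1 : ℂ) ^ k / ((k : ℂ) ^ 2 + w ^ 2))
      (1 / (2 * w ^ 2) + (π : ℂ) / (2 * w * Complex.sinh ((π : ℂ) * w))) := by
  have hπ : (π:ℂ) ≠ 0 := by exact_mod_cast Real.pi_ne_zero
  have hw0 : w ≠ 0 := by
    intro h; rw [h] at hw; simp at hw
  have hS := sinh_ne w hw
  set S := Complex.sinh ((π:ℂ) * w) with hSdef
  have hsum : Summable (fourierCoeff (⇑(myF w))) := by
    apply Summable.of_norm_bounded ((summable_inv_sq w hw).mul_left ‖w * S / π‖)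
    intro n
    rw [myF_coeff w hw n]
    apply le_of_eq
    rw [show (-1:ℂ)^n * w * S / ((π:ℂ) * ((n:ℂ)^2 + w^2))
        = (w * S / π) * ((-1:ℂ)^n * ((n:ℂ)^2 + w^2)⁻¹) from by field_simp]
    rw [norm_mul, norm_mul, norm_zpow, norm_neg, norm_one, one_zpow, one_mul]
  have H := has_pointwise_sum_fourier_series_of_summable hsum (0 : AddCircle (2*π))
  simp only [fourier_eval_zero, smul_eq_mul, mul_one] at H
  have hF0 : (myF w) 0 = 1 := by
    show AddCircle.liftIco (2*π) (-π) (fun x => Complex.cosh (w * x)) 0 = 1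
    rw [show (0 : AddCircle (2*π)) = ((0:ℝ) : AddCircle (2*π)) from by norm_num]
    rw [AddCircle.liftIco_coe_apply (by constructor <;> simp [Real.pi_pos.le] <;>
      linarith [Real.pi_pos])]
    simp
  rw [hF0] at H
  simp only [myF_coeff w hw] at H
  have H2 : HasSum (fun i : ℤ => (-1:ℂ)^i / ((i:ℂ)^2 + w^2)) ((π:ℂ) / (w * S)) := by
    have H' := H.mul_left ((π:ℂ) / (w * S))
    rw [mul_one] at H'
    have heq : (fun i : ℤ => (π:ℂ) / (w * S) * ((-1:ℂ)^i * w * S / (π * ((i:ℂ)^2 + w^2))))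
        = fun i : ℤ => (-1:ℂ)^i / ((i:ℂ)^2 + w^2) := by
      funext i
      have := sq_ne w hw i
      field_simp
    rwa [heq] at H'
  have H3 := H2.nat_add_neg
  have H4 : HasSum (fun m : ℕ => (-1:ℂ)^m / ((m:ℂ)^2 + w^2))
      (((π:ℂ) / (w * S) + (-1:ℂ)^((0:ℤ)) / (((0:ℤ):ℂ)^2 + w^2)) / 2) := by
    apply (H3.div_const 2).congr_fun
    intro m
    have h1 : ((-1:ℂ))^(-(m:ℤ)) = (-1:ℂ)^m := by
      rw [zpow_neg, ← inv_zpow, inv_neg, inv_one, zpow_natCast]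
    have h2 : ((-1:ℂ))^((m:ℤ)) = (-1:ℂ)^m := zpow_natCast _ _
    rw [h1, h2]
    push_cast
    ring
  have hval : ((π:ℂ) / (w * S) + (-1:ℂ)^((0:ℤ)) / (((0:ℤ):ℂ)^2 + w^2)) / 2
      = 1 / (2 * w^2) + (π:ℂ) / (2 * w * S) := by
    simp only [Int.cast_zero, zpow_zero]
    field_simp
    ring
  rwa [hval] at H4
end

section
/- Let c > 0, and for τ > 1/c² set z = -cτ(1 + i√(1 - 1/(c²τ))) and v(x,t) = e^{-z²t}·e^{xz}. Then for fixed real numbers x ≥ 0, t ≥ 0 and s: if s < cx + t then e^{τs}|v(x,t)| → 0 as τ → ∞, and if s > cx + t then e^{τs}|v(x,t)| → ∞ as τ → ∞. -/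
open Real Complex Filter

/-- For `c > 0`, `τ > 1/c²`, let `z(τ) = -cτ(1 + i√(1 - 1/(c²τ)))` and
`v(x,t) = e^{-z²t} e^{xz}`.  For fixed `x ≥ 0`, `t ≥ 0`, `s` real:
if `s < cx + t` then `e^{τs}|v(x,t)| → 0` as `τ → ∞`, and
if `s > cx + t` then `e^{τs}|v(x,t)| → ∞` as `τ → ∞`. -/
theorem stmt4 (c : ℝ) (hc : 0 < c)
    (z : ℝ → ℂ)
    (hz : ∀ τ : ℝ, 1 / c ^ 2 < τ →
      z τ = -(c : ℂ) * τ * (1 + Complex.I * (Real.sqrt (1 - 1 / (c ^ 2 * τ)) : ℂ)))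
    (v : ℝ → ℝ → ℝ → ℂ)
    (hv : ∀ τ x t, v τ x t = Complex.exp (-(z τ) ^ 2 * t) * Complex.exp (x * z τ))
    (x t s : ℝ) (hx : 0 ≤ x) (ht : 0 ≤ t) :
    (s < c * x + t →
      Tendsto (fun τ : ℝ => Real.exp (τ * s) * ‖v τ x t‖) atTop (nhds 0)) ∧
    (s > c * x + t →
      Tendsto (fun τ : ℝ => Real.exp (τ * s) * ‖v τ x t‖) atTop atTop) := by
  have hkey : ∀ᶠ τ : ℝ in atTop,
      Real.exp (τ * s) * ‖v τ x t‖ = Real.exp (τ * (s - c * x - t)) := by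
    filter_upwards [eventually_gt_atTop (1 / c ^ 2)] with τ hτ
    have hτ0 : 0 < τ := lt_trans (by positivity) hτ
    have hnn : 0 ≤ 1 - 1 / (c ^ 2 * τ) := by
      have h1 : 1 / (c ^ 2 * τ) < 1 := by
        rw [div_lt_one (by positivity)]
        calc (1:ℝ) = c ^ 2 * (1 / c ^ 2) := by field_simp
        _ < c ^ 2 * τ := mul_lt_mul_of_pos_left hτ (by positivity)
      linarith
    have hw : Real.sqrt (1 - 1 / (c ^ 2 * τ)) ^ 2 = 1 - 1 / (c ^ 2 * τ) :=
      Real.sq_sqrt hnn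
    have hzre : (z τ).re = -(c * τ) := by rw [hz τ hτ]; simp
    have hzim : (z τ).im = -(c * τ) * Real.sqrt (1 - 1 / (c ^ 2 * τ)) := by
      rw [hz τ hτ]; simp
    have hre2 : ((z τ) ^ 2).re = τ := by
      rw [pow_two, Complex.mul_re, hzre, hzim]
      have : (-(c * τ)) * (-(c * τ)) - (-(c * τ) * Real.sqrt (1 - 1 / (c ^ 2 * τ))) *
          (-(c * τ) * Real.sqrt (1 - 1 / (c ^ 2 * τ)))
          = c ^ 2 * τ ^ 2 * (1 - Real.sqrt (1 - 1 / (c ^ 2 * τ)) ^ 2) := by ring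
      rw [this, hw]
      field_simp
      ring
    have hA : (-(z τ) ^ 2 * (t : ℂ)).re = -τ * t := by
      simp [Complex.mul_re, hre2]
    have hB : ((x : ℂ) * z τ).re = x * (-(c * τ)) := by
      simp [Complex.mul_re, hzre]
    rw [hv, norm_mul, Complex.norm_exp, Complex.norm_exp, hA, hB,
      ← Real.exp_add, ← Real.exp_add]
    congr 1
    ring
  constructor
  · intro hs
    apply Tendsto.congr' (Filter.EventuallyEq.symm hkey)
    have h : Tendsto (fun τ : ℝ => τ * (s - c * x - t)) atTop atBot :=
      Tendsto.atTop_mul_const_of_neg (by linarith) tendsto_id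
    exact Real.tendsto_exp_atBot.comp h
  · intro hs
    apply Tendsto.congr' (Filter.EventuallyEq.symm hkey)
    have h : Tendsto (fun τ : ℝ => τ * (s - c * x - t)) atTop atTop :=
      Tendsto.atTop_mul_const (by linarith) tendsto_id
    exact Real.tendsto_exp_atTop.comp h
end

section
/- Let a, c, T > 0 with T > 2ca, let A > 0, m a nonnegative integer, and suppose g : ℝ → ℝ satisfies A/2 ≤ τ^m·e^{2caτ}·g(τ) ≤ 3A/2 for all τ ≥ τ₀. For δ ∈ (0,1) and σ ∈ (0,1), set τ_σ(δ) = (σ/T)·|log δ|, and let h_δ : ℝ → ℝ satisfy |h_δ(τ) - g(τ)| ≤ (c√τ + 1/√(2τ))·δ for all τ ≥ τ₀. Then |log h_δ(τ_σ(δ))/τ_σ(δ) + 2ca| = O(log|log δ| / |log δ|) as δ → 0⁺. -/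
open Real Filter

set_option maxHeartbeats 1000000 in
/-- Stability of the enclosure method under noise: if `g` satisfies the two-sided bound
`A/2 ≤ τ^m e^{2caτ} g(τ) ≤ 3A/2` for `τ ≥ τ₀`, `T > 2ca`, and the noisy indicators `H δ`
satisfy `|H δ τ - g τ| ≤ (c√τ + 1/√(2τ))δ`, then with `τ_σ(δ) = (σ/T)|log δ|` one has
`|log(H δ (τ_σ(δ)))/τ_σ(δ) + 2ca| = O(log|log δ|/|log δ|)` as `δ → 0⁺`. -/
theorem stmt19 (a c T A τ₀ σ : ℝ) (ha : 0 < a) (hc : 0 < c) (hT : 2 * c * a < T)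
    (hA : 0 < A) (hσ : σ ∈ Set.Ioo (0 : ℝ) 1) (m : ℕ)
    (g : ℝ → ℝ)
    (hg : ∀ τ : ℝ, τ₀ ≤ τ →
      A / 2 ≤ τ ^ m * Real.exp (2 * c * a * τ) * g τ ∧
      τ ^ m * Real.exp (2 * c * a * τ) * g τ ≤ 3 * A / 2)
    (H : ℝ → ℝ → ℝ)
    (hH : ∀ δ ∈ Set.Ioo (0 : ℝ) 1, ∀ τ : ℝ, τ₀ ≤ τ →
      |H δ τ - g τ| ≤ (c * Real.sqrt τ + 1 / Real.sqrt (2 * τ)) * δ) :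
    ∃ C : ℝ, 0 < C ∧ ∀ᶠ δ in nhdsWithin (0 : ℝ) (Set.Ioi 0),
      |Real.log (H δ ((σ / T) * |Real.log δ|)) / ((σ / T) * |Real.log δ|) + 2 * c * a|
        ≤ C * Real.log |Real.log δ| / |Real.log δ| := by
  obtain ⟨hσ0, hσ1⟩ := hσ
  have hca : 0 < 2 * c * a := by positivity
  have hT0 : 0 < T := hca.trans hT
  have hTσ : T < T / σ := by
    rw [lt_div_iff₀ hσ0]
    nlinarith
  set ε : ℝ := T / σ - 2 * c * a with hεdef
  have hε0 : 0 < ε := by simp only [hεdef]; linarith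
  set K : ℝ := max |Real.log (A / 4)| |Real.log (7 * A / 4)| with hKdef
  -- the eventual smallness of the perturbation term
  have htend : Tendsto (fun τ : ℝ => (c + 1) * (τ ^ (m + 1) * Real.exp (-(ε * τ))))
      atTop (nhds 0) := by
    have h1 : Tendsto (fun x : ℝ => x ^ (m + 1) * Real.exp (-x)) atTop (nhds 0) :=
      tendsto_pow_mul_exp_neg_atTop_nhds_zero (m + 1)
    have h2 : Tendsto (fun τ : ℝ => ε * τ) atTop atTop :=
      tendsto_id.const_mul_atTop hε0
    have h3 : Tendsto (fun τ : ℝ => (ε * τ) ^ (m + 1) * Real.exp (-(ε * τ)))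
        atTop (nhds 0) := h1.comp h2
    have h4 : Tendsto (fun τ : ℝ => ((c + 1) / ε ^ (m + 1)) *
        ((ε * τ) ^ (m + 1) * Real.exp (-(ε * τ)))) atTop (nhds 0) := by
      simpa using h3.const_mul ((c + 1) / ε ^ (m + 1))
    have heq : (fun τ : ℝ => ((c + 1) / ε ^ (m + 1)) *
        ((ε * τ) ^ (m + 1) * Real.exp (-(ε * τ))))
        = (fun τ : ℝ => (c + 1) * (τ ^ (m + 1) * Real.exp (-(ε * τ)))) := by
      funext τ
      have hεne : (ε : ℝ) ^ (m + 1) ≠ 0 := by positivity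
      field_simp [mul_pow]
      ring
    rwa [heq] at h4
  obtain ⟨M₀, hM₀⟩ := (htend.eventually_le_const (show (0:ℝ) < A / 4 by positivity)).exists_forall_of_atTop
  set M : ℝ := max (max τ₀ (Real.exp K)) (max 1 M₀) with hMdef
  set M' : ℝ := Real.exp |Real.log (σ / T)| with hM'def
  clear_value ε K M M'
  refine ⟨2 * (m + 1) * (T / σ), by positivity, ?_⟩
  -- eventual facts about δ
  have hLtop : Tendsto (fun δ : ℝ => |Real.log δ|) (nhdsWithin 0 (Set.Ioi 0)) atTop :=
    tendsto_abs_atBot_atTop.comp Real.tendsto_log_nhdsGT_zero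
  have hτtop : Tendsto (fun δ : ℝ => (σ / T) * |Real.log δ|)
      (nhdsWithin 0 (Set.Ioi 0)) atTop :=
    hLtop.const_mul_atTop (by positivity)
  have hIoo : ∀ᶠ δ in nhdsWithin (0:ℝ) (Set.Ioi 0), δ ∈ Set.Ioo (0:ℝ) 1 :=
    eventually_nhdsWithin_of_eventually_nhds (eventually_lt_nhds one_pos) |>.and
      (eventually_mem_nhdsWithin) |>.mono (fun δ h => ⟨h.2, h.1⟩)
  filter_upwards [hIoo, hτtop.eventually_ge_atTop M, hLtop.eventually_ge_atTop M'] with δ hδ hτM hLM'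
  obtain ⟨hδ0, hδ1⟩ := hδ
  rw [hMdef] at hτM
  rw [hM'def] at hLM'
  set L : ℝ := |Real.log δ| with hLdef
  set τ : ℝ := (σ / T) * L with hτdef
  clear_value L τ
  have hτ1 : (1:ℝ) ≤ τ := le_trans (le_trans (le_max_left 1 M₀) (le_max_right _ _)) hτM
  have hτ0 : 0 < τ := lt_of_lt_of_le one_pos hτ1
  have hττ₀ : τ₀ ≤ τ := le_trans (le_trans (le_max_left τ₀ _) (le_max_left _ _)) hτM
  have hτK : Real.exp K ≤ τ := le_trans (le_trans (le_max_right τ₀ _) (le_max_left _ _)) hτM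
  have hτM₀ : M₀ ≤ τ := le_trans (le_trans (le_max_right 1 M₀) (le_max_right _ _)) hτM
  have hL1 : (1:ℝ) ≤ L := le_trans (Real.one_le_exp (abs_nonneg _)) hLM'
  have hL0 : 0 < L := lt_of_lt_of_le one_pos hL1
  -- δ = exp(-(T/σ) * τ)
  have hLeq : L = -Real.log δ := by
    rw [hLdef]; exact abs_of_neg (Real.log_neg hδ0 hδ1)
  have hLτ : L = (T / σ) * τ := by
    rw [hτdef]
    field_simp
  have hδeq : δ = Real.exp (-((T / σ) * τ)) := by
    rw [← hLτ, hLeq, neg_neg, Real.exp_log hδ0]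
  set D : ℝ := τ ^ m * Real.exp (2 * c * a * τ) with hDdef
  clear_value D
  have hD0 : 0 < D := by
    rw [hDdef]; exact mul_pos (pow_pos hτ0 m) (Real.exp_pos _)
  obtain ⟨hg1, hg2⟩ := hg τ hττ₀
  -- bound the perturbation
  have hpert : |H δ τ - g τ| * D ≤ A / 4 := by
    have h1 : |H δ τ - g τ| ≤ (c * Real.sqrt τ + 1 / Real.sqrt (2 * τ)) * δ :=
      hH δ ⟨hδ0, hδ1⟩ τ hττ₀
    have hsq : c * Real.sqrt τ + 1 / Real.sqrt (2 * τ) ≤ (c + 1) * τ := by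
      have h2 : Real.sqrt τ ≤ τ := Real.sqrt_le_iff.mpr ⟨hτ0.le, by nlinarith⟩
      have h3 : (1:ℝ) ≤ Real.sqrt (2 * τ) := by
        rw [show (1:ℝ) = Real.sqrt 1 by simp]
        exact Real.sqrt_le_sqrt (by linarith)
      have h4 : 1 / Real.sqrt (2 * τ) ≤ 1 := by
        rw [div_le_one (lt_of_lt_of_le one_pos h3)]; exact h3
      nlinarith [Real.sqrt_nonneg τ]
    have h5 : |H δ τ - g τ| ≤ (c + 1) * τ * δ := by
      calc |H δ τ - g τ| ≤ (c * Real.sqrt τ + 1 / Real.sqrt (2 * τ)) * δ := h1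
        _ ≤ (c + 1) * τ * δ := by
            apply mul_le_mul_of_nonneg_right hsq hδ0.le
    have hexp : Real.exp (-((T / σ) * τ)) * Real.exp (2 * c * a * τ)
        = Real.exp (-(ε * τ)) := by
      rw [← Real.exp_add]
      congr 1
      simp only [hεdef]
      ring
    have h6 : (c + 1) * τ * δ * D = (c + 1) * (τ ^ (m + 1) * Real.exp (-(ε * τ))) := by
      rw [hδeq, hDdef]
      rw [show (c + 1) * τ * Real.exp (-(T / σ * τ)) * (τ ^ m * Real.exp (2 * c * a * τ))
          = (c + 1) * ((τ * τ ^ m) * (Real.exp (-(T / σ * τ)) * Real.exp (2 * c * a * τ)))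
          by ring, hexp]
      ring
    calc |H δ τ - g τ| * D ≤ (c + 1) * τ * δ * D :=
          mul_le_mul_of_nonneg_right h5 hD0.le
      _ = (c + 1) * (τ ^ (m + 1) * Real.exp (-(ε * τ))) := h6
      _ ≤ A / 4 := hM₀ τ hτM₀
  -- two-sided bound on D * H
  have habs : |D * (H δ τ - g τ)| ≤ A / 4 := by
    rw [abs_mul, abs_of_pos hD0, mul_comm]; exact hpert
  have habs' := abs_le.mp habs
  have hg1' : A / 2 ≤ D * g τ := by rw [hDdef]; exact hg1
  have hg2' : D * g τ ≤ 3 * A / 2 := by rw [hDdef]; exact hg2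
  have hsplit : D * H δ τ = D * g τ + D * (H δ τ - g τ) := by ring
  have hDH1 : A / 4 ≤ D * H δ τ := by
    rw [hsplit]; linarith [habs'.1]
  have hDH2 : D * H δ τ ≤ 7 * A / 4 := by
    rw [hsplit]; linarith [habs'.2]
  have hDH0 : 0 < D * H δ τ := lt_of_lt_of_le (by positivity) hDH1
  have hH0 : 0 < H δ τ := by
    by_contra h
    push_neg at h
    have : D * H δ τ ≤ 0 := mul_nonpos_of_nonneg_of_nonpos hD0.le h
    linarith
  -- log computations
  have hlogH : Real.log (H δ τ) = Real.log (D * H δ τ) - ((m : ℝ) * Real.log τ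
      + 2 * c * a * τ) := by
    rw [Real.log_mul hD0.ne' hH0.ne', hDdef,
      Real.log_mul (by positivity) (Real.exp_ne_zero _), Real.log_pow, Real.log_exp]
    push_cast
    ring
  have hlogDH : |Real.log (D * H δ τ)| ≤ K := by
    rw [abs_le]
    constructor
    · calc -K ≤ -|Real.log (A / 4)| := by
            simp only [hKdef, neg_le_neg_iff]; exact le_max_left _ _
        _ ≤ Real.log (A / 4) := neg_abs_le _
        _ ≤ Real.log (D * H δ τ) := Real.log_le_log (by positivity) hDH1
    · calc Real.log (D * H δ τ) ≤ Real.log (7 * A / 4) :=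
            Real.log_le_log hDH0 hDH2
        _ ≤ |Real.log (7 * A / 4)| := le_abs_self _
        _ ≤ K := by rw [hKdef]; exact le_max_right _ _
  have hlogτ0 : 0 ≤ Real.log τ := Real.log_nonneg hτ1
  have hKlogτ : K ≤ Real.log τ := by
    calc K = Real.log (Real.exp K) := (Real.log_exp K).symm
      _ ≤ Real.log τ := Real.log_le_log (Real.exp_pos K) hτK
  -- key quantity
  have hmain : Real.log (H δ τ) / τ + 2 * c * a
      = (Real.log (D * H δ τ) - (m : ℝ) * Real.log τ) / τ := by
    have haux : ∀ x y z w : ℝ, w ≠ 0 → (x - (y + z * w)) / w + z = (x - y) / w := by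
      intro x y z w hw
      field_simp
      ring
    rw [hlogH]
    exact haux _ _ _ _ hτ0.ne'
  have hlogL0 : 0 ≤ Real.log L := Real.log_nonneg hL1
  have hlogτL : Real.log τ ≤ 2 * Real.log L := by
    have h1 : Real.log τ = Real.log (σ / T) + Real.log L := by
      rw [hτdef, Real.log_mul (by positivity) hL0.ne']
    have h2 : |Real.log (σ / T)| ≤ Real.log L := by
      calc |Real.log (σ / T)| = Real.log (Real.exp |Real.log (σ / T)|) :=
            (Real.log_exp _).symm
        _ ≤ Real.log L := Real.log_le_log (Real.exp_pos _) hLM'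
    have h3 : Real.log (σ / T) ≤ |Real.log (σ / T)| := le_abs_self _
    linarith
  rw [hmain]
  calc |(Real.log (D * H δ τ) - (m : ℝ) * Real.log τ) / τ|
      ≤ (K + (m : ℝ) * Real.log τ) / τ := by
        rw [abs_div, abs_of_pos hτ0]
        gcongr
        calc |Real.log (D * H δ τ) - (m : ℝ) * Real.log τ|
            ≤ |Real.log (D * H δ τ)| + |(m : ℝ) * Real.log τ| := abs_sub _ _
          _ ≤ K + (m : ℝ) * Real.log τ := by
              rw [abs_of_nonneg (mul_nonneg (Nat.cast_nonneg m) hlogτ0)]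
              exact add_le_add_left hlogDH _
    _ ≤ (((m : ℝ) + 1) * Real.log τ) / τ := by
        gcongr
        nlinarith
    _ ≤ (((m : ℝ) + 1) * (2 * Real.log L)) / τ := by
        gcongr
    _ = 2 * ((m : ℝ) + 1) * (T / σ) * Real.log L / L := by
        rw [hτdef]
        field_simp
end
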